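/- Let v₁ = (0,0,0), v₂ = (1000,0,0), v₃ = (468,847,0), v₄ = (783,−100,−68), v₅ = (238,−712,−640), v₆ = (−141,183,−406), v₇ = (519,−310,161), v₈ = (702,611,−183), v₉ = (395,−121,425), v₁₀ = (764,−480,−432) in ℝ³, and define edge vectors eᵢ = v_{i+1} − vᵢ for i = 1, …, 9 and e₁₀ = v₁ − v₁₀. Then there is no w ∈ ℝ³ such that (−1)^{i+1} (w · eᵢ) > 0 for every i ∈ {1, …, 10}. -/

import Mathlib

/-- The vertices of the paper's 10-stick polygonal realization of the knot `8_6`.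
Here `vert8_6 i` is the paper's vertex `v_(i+1)`. -/
noncomputable def vert8_6 : Fin 10 → (Fin 3 → ℝ) :=
  ![![0, 0, 0], ![1000, 0, 0], ![468, 847, 0], ![783, -100, -68], ![238, -712, -640], ![-141, 183, -406], ![519, -310, 161], ![702, 611, -183], ![395, -121, 425], ![764, -480, -432]]

/-- The edge vectors `eᵢ = v_(i+1) − vᵢ` (cyclically, so `e₁₀ = v₁ − v₁₀`);
here `edge8_6 i` is the paper's `e_(i+1)`, using wrap-around addition on `Fin 10`. -/
noncomputable def edge8_6 (i : Fin 10) : Fin 3 → ℝ :=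
  vert8_6 (i + 1) - vert8_6 i

/-- There is no `w ∈ ℝ³` such that `(−1)^(i+1) (w · eᵢ) > 0` for every
`i ∈ {1, …, 10}`: no projection of this polygon (the knot `8_6`) to a line has
5 local maxima. (With 0-based indexing `i : Fin 10`, the sign is `(−1)^i`.) -/
theorem no_alternating_direction_8_6 :
    ¬ ∃ w : Fin 3 → ℝ, ∀ i : Fin 10,
        0 < (-1 : ℝ) ^ (i : ℕ) * ∑ j : Fin 3, w j * edge8_6 i j := by
  rintro ⟨w, h⟩
  have h0 := h 0
  have h2 := h 2
  have h4 := h 4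
  have h5 := h 5
  have e0 : edge8_6 0 = ![1000, 0, 0] - ![0, 0, 0] := rfl
  have e2 : edge8_6 2 = ![783, -100, -68] - ![468, 847, 0] := rfl
  have e4 : edge8_6 4 = ![-141, 183, -406] - ![238, -712, -640] := rfl
  have e5 : edge8_6 5 = ![519, -310, 161] - ![-141, 183, -406] := rfl
  rw [e0] at h0; rw [e2] at h2; rw [e4] at h4; rw [e5] at h5
  norm_num [Fin.sum_univ_three, show ((4:Fin 10):ℕ) = 4 from rfl,
    show ((5:Fin 10):ℕ) = 5 from rfl, Matrix.cons_val_two, Matrix.tail_cons, Matrix.head_cons] at h0 h2 h4 h5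
  linarith
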